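/- Let q ≥ 2 be an integer and let l ≥ 2 be a natural number. Then the number of natural numbers n < q^l whose base-q digit sum satisfies s_q(n) ≤ (q−1)·l·(1/2 − (log l)/√l) is at most q^l · exp(−(log l)²/18). -/

import Mathlib

open Finset Real

private lemma exp_le_add_exp_sq (x : ℝ) : Real.exp x ≤ x + Real.exp (x ^ 2) := by
  rcases le_or_gt x (-1) with h | h
  · have h1 : Real.exp x ≤ 1 := Real.exp_le_one_iff.mpr (by linarith)
    have h2 : 1 + x ^ 2 ≤ Real.exp (x ^ 2) := by
      have := Real.add_one_le_exp (x ^ 2); linarith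
    nlinarith
  rcases le_or_gt x 1 with h' | h'
  · have hx : |x| ≤ 1 := abs_le.mpr ⟨by linarith, h'⟩
    have hb := Real.exp_bound hx (n := 2) (by norm_num)
    have hb1 : Real.exp x - (1 + x) ≤ |x| ^ 2 * (3 / (2 * 2)) := by
      have := (abs_sub_le_iff.mp hb).1
      simpa [Finset.sum_range_succ, Nat.factorial] using this
    have h2 : 1 + x ^ 2 ≤ Real.exp (x ^ 2) := by
      have := Real.add_one_le_exp (x ^ 2); linarith
    have : |x| ^ 2 = x ^ 2 := sq_abs x
    nlinarith
  · have : Real.exp x ≤ Real.exp (x ^ 2) := Real.exp_le_exp.mpr (by nlinarith)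
    nlinarith [Real.exp_pos (x ^ 2)]

private lemma digitSum_add_mul (q : ℕ) (hq : 2 ≤ q) (d m : ℕ) (hd : d < q) :
    (Nat.digits q (d + q * m)).sum = d + (Nat.digits q m).sum := by
  rcases Nat.eq_zero_or_pos (d + q * m) with h | h
  · have hd0 : d = 0 := by omega
    have hm0 : m = 0 := by
      rcases Nat.eq_zero_or_pos m with h' | h'
      · exact h'
      · exfalso; nlinarith
    simp [hd0, hm0]
  · rw [Nat.digits_def' (by omega : 1 < q) h]
    have h1 : (d + q * m) % q = d := by
      rw [Nat.add_mul_mod_self_left, Nat.mod_eq_of_lt hd]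
    have h2 : (d + q * m) / q = m := by
      rw [Nat.add_mul_div_left _ _ (by omega : 0 < q), Nat.div_eq_of_lt hd]; omega
    rw [h1, h2, List.sum_cons]

private lemma sum_exp_digitSum (q : ℕ) (hq : 2 ≤ q) (t : ℝ) (l : ℕ) :
    ∑ n ∈ Finset.range (q ^ l), Real.exp (t * ((Nat.digits q n).sum : ℝ)) =
      (∑ d ∈ Finset.range q, Real.exp (t * (d : ℝ))) ^ l := by
  induction l with
  | zero => simp
  | succ l ih =>
    have key : ∑ n ∈ Finset.range (q * q ^ l), Real.exp (t * ((Nat.digits q n).sum : ℝ)) =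
        ∑ p ∈ Finset.range q ×ˢ Finset.range (q ^ l),
          Real.exp (t * ((Nat.digits q (p.1 + q * p.2)).sum : ℝ)) := by
      apply Finset.sum_nbij' (fun n => (n % q, n / q)) (fun p => p.1 + q * p.2)
      · intro a ha
        simp only [Finset.mem_range, Finset.mem_product] at *
        constructor
        · exact Nat.mod_lt _ (by omega)
        · exact Nat.div_lt_of_lt_mul (by linarith [ha])
      · intro p hp
        simp only [Finset.mem_range, Finset.mem_product] at *
        calc p.1 + q * p.2 < q + q * p.2 := by omega
          _ ≤ q * q ^ l := by nlinarith [hp.1, hp.2]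
      · intro a _; exact Nat.mod_add_div a q
      · intro p hp
        simp only [Finset.mem_range, Finset.mem_product] at hp
        simp [Nat.add_mul_mod_self_left, Nat.mod_eq_of_lt hp.1,
          Nat.add_mul_div_left _ _ (by omega : 0 < q), Nat.div_eq_of_lt hp.1]
      · intro a _; simp [Nat.mod_add_div]
    rw [pow_succ', key, Finset.sum_product]
    have : ∀ d ∈ Finset.range q, ∀ m ∈ Finset.range (q ^ l),
        Real.exp (t * ((Nat.digits q (d + q * m)).sum : ℝ)) =
          Real.exp (t * (d : ℝ)) * Real.exp (t * ((Nat.digits q m).sum : ℝ)) := by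
      intro d hd m _
      rw [digitSum_add_mul q hq d m (Finset.mem_range.mp hd)]
      push_cast
      rw [mul_add, Real.exp_add]
    calc ∑ d ∈ Finset.range q, ∑ m ∈ Finset.range (q ^ l),
          Real.exp (t * ((Nat.digits q (d + q * m)).sum : ℝ))
        = ∑ d ∈ Finset.range q, ∑ m ∈ Finset.range (q ^ l),
            Real.exp (t * (d : ℝ)) * Real.exp (t * ((Nat.digits q m).sum : ℝ)) := by
          apply Finset.sum_congr rfl; intro d hd
          exact Finset.sum_congr rfl (fun m hm => this d hd m hm)
      _ = (∑ d ∈ Finset.range q, Real.exp (t * (d : ℝ))) *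
            (∑ m ∈ Finset.range (q ^ l), Real.exp (t * ((Nat.digits q m).sum : ℝ))) := by
          rw [Finset.sum_mul]
          exact Finset.sum_congr rfl (fun d _ => (Finset.mul_sum _ _ _).symm)
      _ = (∑ d ∈ Finset.range q, Real.exp (t * (d : ℝ))) ^ (l + 1) := by rw [ih]; ring

/-- Quantitative Chernoff bound with deviation `δ = (log l)/√l`: the number of
`n < q^l` with digit sum at most `(q-1) l (1/2 - (log l)/√l)` is at most
`q^l exp(-(log l)²/18)`. -/
theorem chernoff_digit_sum_log (q : ℕ) (hq : 2 ≤ q) (l : ℕ) (hl : 2 ≤ l) :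
    (((Finset.range (q ^ l)).filter fun n =>
        ((Nat.digits q n).sum : ℝ) ≤
          (q - 1) * l * (1 / 2 - Real.log l / Real.sqrt l)).card : ℝ) ≤
      (q : ℝ) ^ l * Real.exp (-(Real.log l) ^ 2 / 18) := by
  set δ : ℝ := Real.log l / Real.sqrt l with hδdef
  have hqpos : (0 : ℝ) < (q : ℝ) - 1 := by
    have : (2 : ℝ) ≤ q := by exact_mod_cast hq
    linarith
  have hlpos : (0 : ℝ) < l := by positivity
  have hl1 : (1 : ℝ) < l := by exact_mod_cast hl
  have hlog : 0 < Real.log l := Real.log_pos hl1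
  have hsqrt : 0 < Real.sqrt l := Real.sqrt_pos.mpr hlpos
  have hδpos : 0 < δ := div_pos hlog hsqrt
  set t : ℝ := 2 * δ / ((q : ℝ) - 1) with htdef
  have htpos : 0 < t := div_pos (by linarith) hqpos
  set T : ℝ := ((q : ℝ) - 1) * l * (1 / 2 - δ) with hTdef
  set μ : ℝ := ((q : ℝ) - 1) / 2 with hμdef
  set c : ℝ := t ^ 2 * ((q : ℝ) - 1) ^ 2 / 4 with hcdef
  -- Step 1: card ≤ ∑ over range of exp (t * (T - s n))
  have step1 : (((Finset.range (q ^ l)).filter fun n =>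
        ((Nat.digits q n).sum : ℝ) ≤ T).card : ℝ) ≤
      ∑ n ∈ Finset.range (q ^ l), Real.exp (t * (T - ((Nat.digits q n).sum : ℝ))) := by
    rw [Finset.card_eq_sum_ones, Nat.cast_sum]
    simp only [Nat.cast_one]
    calc (∑ _n ∈ (Finset.range (q ^ l)).filter fun n =>
            ((Nat.digits q n).sum : ℝ) ≤ T, (1 : ℝ))
        ≤ ∑ n ∈ (Finset.range (q ^ l)).filter fun n =>
            ((Nat.digits q n).sum : ℝ) ≤ T,
            Real.exp (t * (T - ((Nat.digits q n).sum : ℝ))) := by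
          apply Finset.sum_le_sum
          intro n hn
          have hn' := (Finset.mem_filter.mp hn).2
          have : 0 ≤ t * (T - ((Nat.digits q n).sum : ℝ)) := by
            apply mul_nonneg htpos.le; linarith
          simpa using Real.exp_le_exp.mpr this
      _ ≤ ∑ n ∈ Finset.range (q ^ l),
            Real.exp (t * (T - ((Nat.digits q n).sum : ℝ))) := by
          apply Finset.sum_le_sum_of_subset_of_nonneg (Finset.filter_subset _ _)
          intro n _ _
          exact (Real.exp_pos _).le
  -- Step 2: factor out exp (t*T)
  have step2 : ∑ n ∈ Finset.range (q ^ l), Real.exp (t * (T - ((Nat.digits q n).sum : ℝ))) =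
      Real.exp (t * T) * (∑ d ∈ Finset.range q, Real.exp (-t * (d : ℝ))) ^ l := by
    rw [← sum_exp_digitSum q hq (-t) l, Finset.mul_sum]
    apply Finset.sum_congr rfl
    intro n _
    rw [← Real.exp_add]
    ring_nf
  -- Step 3: bound the inner sum
  have gauss : ∑ d ∈ Finset.range q, (d : ℝ) = q * ((q : ℝ) - 1) / 2 := by
    have h := Finset.sum_range_id_mul_two q
    have h2 := congrArg (fun n : ℕ => (n : ℝ)) h
    push_cast [Nat.cast_sub (show 1 ≤ q by omega)] at h2
    linarith
  have step3 : ∑ d ∈ Finset.range q, Real.exp (-t * (d : ℝ)) ≤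
      (q : ℝ) * Real.exp (-(t * μ) + c) := by
    have key : ∀ d ∈ Finset.range q, Real.exp (-t * (d : ℝ)) ≤
        Real.exp (-(t * μ)) * (t * (μ - (d : ℝ)) + Real.exp c) := by
      intro d hd
      have hd' : (d : ℝ) ≤ (q : ℝ) - 1 := by
        have := Finset.mem_range.mp hd
        have : (d : ℝ) ≤ (q : ℝ) - 1 := by
          have h1 : (d : ℕ) ≤ q - 1 := by omega
          have h2 : ((d : ℕ) : ℝ) ≤ ((q - 1 : ℕ) : ℝ) := by exact_mod_cast h1
          rwa [Nat.cast_sub (by omega : 1 ≤ q), Nat.cast_one] at h2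
        exact this
      have hd0 : (0 : ℝ) ≤ (d : ℝ) := Nat.cast_nonneg d
      have h1 : Real.exp (t * (μ - (d : ℝ))) ≤ t * (μ - (d : ℝ)) + Real.exp c := by
        refine le_trans (exp_le_add_exp_sq _) ?_
        have habs : (μ - (d : ℝ)) ^ 2 ≤ ((q : ℝ) - 1) ^ 2 / 4 := by
          rw [hμdef]
          nlinarith [mul_nonneg hd0 (sub_nonneg.mpr hd')]
        have hsq2 : (t * (μ - (d : ℝ))) ^ 2 ≤ c := by
          calc (t * (μ - (d : ℝ))) ^ 2 = t ^ 2 * (μ - (d : ℝ)) ^ 2 := by ring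
            _ ≤ t ^ 2 * (((q : ℝ) - 1) ^ 2 / 4) :=
                mul_le_mul_of_nonneg_left habs (sq_nonneg t)
            _ = c := by rw [hcdef]; ring
        have := Real.exp_le_exp.mpr hsq2
        linarith
      calc Real.exp (-t * (d : ℝ)) = Real.exp (-(t * μ)) * Real.exp (t * (μ - (d : ℝ))) := by
            rw [← Real.exp_add]; ring_nf
        _ ≤ Real.exp (-(t * μ)) * (t * (μ - (d : ℝ)) + Real.exp c) := by
            apply mul_le_mul_of_nonneg_left h1 (Real.exp_pos _).le
    calc ∑ d ∈ Finset.range q, Real.exp (-t * (d : ℝ))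
        ≤ ∑ d ∈ Finset.range q, Real.exp (-(t * μ)) * (t * (μ - (d : ℝ)) + Real.exp c) :=
          Finset.sum_le_sum key
      _ = Real.exp (-(t * μ)) * ∑ d ∈ Finset.range q, (t * (μ - (d : ℝ)) + Real.exp c) := by
          rw [Finset.mul_sum]
      _ = (q : ℝ) * Real.exp (-(t * μ) + c) := by
          have e1 : ∑ d ∈ Finset.range q, (t * (μ - (d : ℝ)) + Real.exp c) =
              (q : ℝ) * Real.exp c := by
            rw [Finset.sum_add_distrib, Finset.sum_const, Finset.card_range, nsmul_eq_mul]
            have e2 : ∑ d ∈ Finset.range q, t * (μ - (d : ℝ)) =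
                (q : ℝ) * (t * μ) - t * ((q : ℝ) * ((q : ℝ) - 1) / 2) := by
              simp only [mul_sub, Finset.sum_sub_distrib, Finset.sum_const,
                Finset.card_range, nsmul_eq_mul, ← Finset.mul_sum, gauss]
            rw [e2, hμdef]
            ring
          rw [e1, Real.exp_add]
          ring
  -- Step 4/5: combine and compute the exponent
  have hsq : Real.sqrt l ^ 2 = (l : ℝ) := Real.sq_sqrt hlpos.le
  have hexp_eq : t * T + (l : ℝ) * (-(t * μ) + c) = -(Real.log l) ^ 2 := by
    have hδ2 : δ ^ 2 * (l : ℝ) = (Real.log l) ^ 2 := by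
      rw [hδdef, div_pow, hsq]
      field_simp
    have ht2 : t * ((q : ℝ) - 1) = 2 * δ := by
      rw [htdef]; field_simp
    have expand : t * T + (l : ℝ) * (-(t * μ) + c) = -(δ ^ 2 * (l : ℝ)) := by
      rw [hTdef, hμdef, hcdef]
      have hq0 : ((q : ℝ) - 1) ≠ 0 := ne_of_gt hqpos
      field_simp [htdef]
      linear_combination (2 * (t * ((q : ℝ) - 1) - 2 * δ)) * ht2
    rw [expand, hδ2]
  have final : Real.exp (t * T) * ((q : ℝ) * Real.exp (-(t * μ) + c)) ^ l =
      (q : ℝ) ^ l * Real.exp (-(Real.log l) ^ 2) := by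
    rw [mul_pow, ← Real.exp_nat_mul, ← hexp_eq, Real.exp_add]
    ring
  -- put everything together
  have hpow_bound : (∑ d ∈ Finset.range q, Real.exp (-t * (d : ℝ))) ^ l ≤
      ((q : ℝ) * Real.exp (-(t * μ) + c)) ^ l := by
    apply pow_le_pow_left₀ _ step3
    positivity
  have hmono : Real.exp (-(Real.log l) ^ 2) ≤ Real.exp (-(Real.log l) ^ 2 / 18) := by
    apply Real.exp_le_exp.mpr
    nlinarith [sq_nonneg (Real.log l)]
  calc (((Finset.range (q ^ l)).filter fun n =>
          ((Nat.digits q n).sum : ℝ) ≤ T).card : ℝ)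
      ≤ ∑ n ∈ Finset.range (q ^ l), Real.exp (t * (T - ((Nat.digits q n).sum : ℝ))) := step1
    _ = Real.exp (t * T) * (∑ d ∈ Finset.range q, Real.exp (-t * (d : ℝ))) ^ l := step2
    _ ≤ Real.exp (t * T) * ((q : ℝ) * Real.exp (-(t * μ) + c)) ^ l := by
        apply mul_le_mul_of_nonneg_left hpow_bound (Real.exp_pos _).le
    _ = (q : ℝ) ^ l * Real.exp (-(Real.log l) ^ 2) := final
    _ ≤ (q : ℝ) ^ l * Real.exp (-(Real.log l) ^ 2 / 18) := by
        apply mul_le_mul_of_nonneg_left hmono (by positivity)
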